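/- Let Γ be a hyperbolic group with a fixed δ-hyperbolic word metric, and let x ∈ Γ be an infinite order element such that γ(z) := ∪_{n∈ℤ} z^n[o,z] is a (c₀,c₁)-quasi-geodesic for all z in a set U(x^{−1},x,R) with constants c₀,c₁ depending only on x, R, δ. Then for all large L > 0 there is a constant C (depending on x, R, L, δ) such that for every positive integer k and every z ∈ U(x^{−1},x,R) with |z| = k, the set C_k(z;x,L,R) := {g⟨z⟩ ∈ Γ/⟨z⟩ : gzg^{−1} ∈ U(x^{−1},x,R), ||z| − k| ≤ L} has cardinality at most C·k. -/

import Mathlib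

noncomputable def wordNorm {Γ : Type*} [Group Γ] (S : Set Γ) (x : Γ) : ℕ :=
  sInf {n | ∃ l : List Γ, l.length = n ∧ (∀ s ∈ l, s ∈ S) ∧ l.prod = x}

noncomputable def wordDist {Γ : Type*} [Group Γ] (S : Set Γ) (x y : Γ) : ℝ :=
  (wordNorm S (x⁻¹ * y) : ℝ)

noncomputable def gpW {Γ : Type*} [Group Γ] (S : Set Γ) (w x y : Γ) : ℝ :=
  (wordDist S w x + wordDist S w y - wordDist S x y) / 2

section Found
variable {Γ : Type*} [Group Γ] (S : Set Γ)

lemma exists_word (hSsym : ∀ s ∈ S, s⁻¹ ∈ S) (hSgen : Subgroup.closure S = ⊤) (g : Γ) :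
    ∃ l : List Γ, (∀ s ∈ l, s ∈ S) ∧ l.prod = g := by
  have hg : g ∈ Subgroup.closure S := hSgen ▸ Subgroup.mem_top g
  induction hg using Subgroup.closure_induction with
  | mem s hs => exact ⟨[s], by simpa using hs, by simp⟩
  | one => exact ⟨[], by simp, by simp⟩
  | mul a b _ _ ha hb =>
    obtain ⟨la, hla, hpa⟩ := ha
    obtain ⟨lb, hlb, hpb⟩ := hb
    exact ⟨la ++ lb, by
      intro s hs; rcases List.mem_append.1 hs with h | h
      exacts [hla s h, hlb s h], by simp [hpa, hpb]⟩
  | inv a _ ha =>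
    obtain ⟨la, hla, hpa⟩ := ha
    refine ⟨(la.map Inv.inv).reverse, ?_, ?_⟩
    · intro s hs
      simp only [List.mem_reverse, List.mem_map] at hs
      obtain ⟨t, ht, rfl⟩ := hs
      exact hSsym t (hla t ht)
    · rw [← List.prod_inv_reverse, hpa]

variable (hSsym : ∀ s ∈ S, s⁻¹ ∈ S) (hSgen : Subgroup.closure S = ⊤)

include hSsym hSgen

lemma wordNorm_exists_list (g : Γ) :
    ∃ l : List Γ, l.length = wordNorm S g ∧ (∀ s ∈ l, s ∈ S) ∧ l.prod = g := by
  have hne : {n | ∃ l : List Γ, l.length = n ∧ (∀ s ∈ l, s ∈ S) ∧ l.prod = g}.Nonempty := by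
    obtain ⟨l, hl, hp⟩ := exists_word S hSsym hSgen g
    exact ⟨l.length, l, rfl, hl, hp⟩
  exact Nat.sInf_mem hne

omit hSsym hSgen in
lemma wordNorm_le_list (g : Γ) (l : List Γ) (hl : ∀ s ∈ l, s ∈ S) (hp : l.prod = g) :
    wordNorm S g ≤ l.length :=
  Nat.sInf_le ⟨l, rfl, hl, hp⟩

omit hSsym hSgen in
lemma wordNorm_one : wordNorm S (1 : Γ) = 0 :=
  Nat.le_zero.mp (wordNorm_le_list S 1 [] (by simp) (by simp))

lemma wordNorm_mul_le (a b : Γ) :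
    wordNorm S (a * b) ≤ wordNorm S a + wordNorm S b := by
  obtain ⟨la, h1a, h2a, h3a⟩ := wordNorm_exists_list S hSsym hSgen a
  obtain ⟨lb, h1b, h2b, h3b⟩ := wordNorm_exists_list S hSsym hSgen b
  have := wordNorm_le_list S (a * b) (la ++ lb) (by
    intro s hs; rcases List.mem_append.1 hs with h | h
    exacts [h2a s h, h2b s h]) (by simp [h3a, h3b])
  simpa [h1a, h1b] using this

lemma wordNorm_inv_le (a : Γ) : wordNorm S a⁻¹ ≤ wordNorm S a := by
  obtain ⟨la, h1, h2, h3⟩ := wordNorm_exists_list S hSsym hSgen a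
  have := wordNorm_le_list S a⁻¹ ((la.map Inv.inv).reverse) (by
    intro s hs
    simp only [List.mem_reverse, List.mem_map] at hs
    obtain ⟨t, ht, rfl⟩ := hs
    exact hSsym t (h2 t ht)) (by rw [← List.prod_inv_reverse, h3])
  simpa [h1] using this

lemma wordNorm_inv (a : Γ) : wordNorm S a⁻¹ = wordNorm S a :=
  le_antisymm (wordNorm_inv_le S hSsym hSgen a)
    (by simpa using wordNorm_inv_le S hSsym hSgen a⁻¹)

lemma wordNorm_eq_zero (a : Γ) (h : wordNorm S a = 0) : a = 1 := by
  obtain ⟨l, h1, h2, h3⟩ := wordNorm_exists_list S hSsym hSgen a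
  rw [h] at h1
  rw [List.length_eq_zero_iff] at h1
  rw [h1] at h3; simpa using h3.symm

end Found
section Dist
variable {Γ : Type*} [Group Γ] (S : Set Γ)
  (hSsym : ∀ s ∈ S, s⁻¹ ∈ S) (hSgen : Subgroup.closure S = ⊤)

lemma wordDist_eq (x y : Γ) : wordDist S x y = (wordNorm S (x⁻¹ * y) : ℝ) := rfl

lemma wordDist_nonneg (x y : Γ) : 0 ≤ wordDist S x y := by
  rw [wordDist_eq]; positivity

lemma wordDist_self (x : Γ) : wordDist S x x = 0 := by
  simp [wordDist_eq, wordNorm_one]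

lemma wordDist_left_inv (g x y : Γ) : wordDist S (g * x) (g * y) = wordDist S x y := by
  simp [wordDist_eq, mul_inv_rev, mul_assoc]

include hSsym hSgen

lemma wordDist_comm (x y : Γ) : wordDist S x y = wordDist S y x := by
  rw [wordDist_eq, wordDist_eq]
  norm_cast
  rw [show y⁻¹ * x = (x⁻¹ * y)⁻¹ by simp, wordNorm_inv S hSsym hSgen]

lemma wordDist_triangle (x y z : Γ) :
    wordDist S x z ≤ wordDist S x y + wordDist S y z := by
  rw [wordDist_eq, wordDist_eq, wordDist_eq]
  norm_cast
  have := wordNorm_mul_le S hSsym hSgen (x⁻¹ * y) (y⁻¹ * z)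
  simpa [mul_assoc] using this

lemma wordDist_norm_sub (x y : Γ) :
    wordDist S (1:Γ) x - wordDist S (1:Γ) y ≤ wordDist S y x := by
  have := wordDist_triangle S hSsym hSgen (1:Γ) y x
  linarith

end Dist

section GP
variable {Γ : Type*} [Group Γ] (S : Set Γ)
  (hSsym : ∀ s ∈ S, s⁻¹ ∈ S) (hSgen : Subgroup.closure S = ⊤)

lemma gpW_eq (w x y : Γ) :
    gpW S w x y = (wordDist S w x + wordDist S w y - wordDist S x y) / 2 := rfl

lemma gpW_left_inv (g w x y : Γ) : gpW S (g * w) (g * x) (g * y) = gpW S w x y := by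
  simp [gpW_eq, wordDist_left_inv]

include hSsym hSgen

lemma gpW_comm (w x y : Γ) : gpW S w x y = gpW S w y x := by
  rw [gpW_eq, gpW_eq, wordDist_comm S hSsym hSgen x y]; ring

lemma gpW_nonneg (w x y : Γ) : 0 ≤ gpW S w x y := by
  have h := wordDist_triangle S hSsym hSgen x w y
  have h2 := wordDist_comm S hSsym hSgen x w
  rw [gpW_eq]; linarith

lemma gpW_le_left (w x y : Γ) : gpW S w x y ≤ wordDist S w x := by
  have h := wordDist_triangle S hSsym hSgen w x y
  rw [gpW_eq]; linarith

/-- basepoint Lipschitz -/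
lemma gpW_base_lipschitz (w w' x y : Γ) :
    gpW S w x y ≤ gpW S w' x y + wordDist S w w' := by
  have h1 := wordDist_triangle S hSsym hSgen w w' x
  have h2 := wordDist_triangle S hSsym hSgen w w' y
  rw [gpW_eq, gpW_eq]
  have h3 := wordDist_comm S hSsym hSgen w' x
  have h4 := wordDist_comm S hSsym hSgen w' y
  linarith

/-- argument Lipschitz -/
lemma gpW_arg_lipschitz (w x y y' : Γ) :
    gpW S w x y ≤ gpW S w x y' + wordDist S y y' := by
  have h1 := wordDist_triangle S hSsym hSgen w y' y
  have h2 := wordDist_triangle S hSsym hSgen x y y'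
  have h3 := wordDist_comm S hSsym hSgen y' y
  rw [gpW_eq, gpW_eq]
  linarith

omit hSsym hSgen in
/-- product vs min of distances minus half gap -/
lemma gpW_ge_min (w x y : Γ) :
    min (wordDist S w x) (wordDist S w y) - wordDist S x y / 2 ≤ gpW S w x y := by
  rw [gpW_eq]
  rcases le_total (wordDist S w x) (wordDist S w y) with hle | hle
  · rw [min_eq_left hle]; linarith
  · rw [min_eq_right hle]; linarith

end GP
section Geo
variable {Γ : Type*} [Group Γ] (S : Set Γ)
  (hSsym : ∀ s ∈ S, s⁻¹ ∈ S) (hSgen : Subgroup.closure S = ⊤)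

/-- a geodesic sequence of length `T` -/
def IsGeo (q : ℕ → Γ) (T : ℕ) : Prop :=
  ∀ i j, i ≤ j → j ≤ T → wordNorm S ((q i)⁻¹ * (q j)) = j - i

omit [Group Γ] in
lemma isGeo_dummy : True := trivial

lemma isGeo_dist {q : ℕ → Γ} {T : ℕ} (hq : IsGeo S q T) {i j : ℕ}
    (hij : i ≤ j) (hj : j ≤ T) : wordDist S (q i) (q j) = (j : ℝ) - i := by
  rw [wordDist_eq, hq i j hij hj, Nat.cast_sub hij]

omit hSsym hSgen in
lemma isGeo_translate (g : Γ) {q : ℕ → Γ} {T : ℕ} (hq : IsGeo S q T) :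
    IsGeo S (fun i => g * q i) T := by
  intro i j hij hj
  have : (g * q i)⁻¹ * (g * q j) = (q i)⁻¹ * (q j) := by group
  rw [this]; exact hq i j hij hj

include hSsym hSgen

lemma exists_geodesic (g : Γ) :
    ∃ q : ℕ → Γ, q 0 = 1 ∧ q (wordNorm S g) = g ∧ IsGeo S q (wordNorm S g) := by
  obtain ⟨l, hlen, hmem, hprod⟩ := wordNorm_exists_list S hSsym hSgen g
  refine ⟨fun i => (l.take i).prod, by simp, by simp [hlen ▸ (List.take_length : l.take l.length = l), hprod], ?_⟩
  intro i j hij hj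
  rw [← hlen] at hj
  have hkey : (l.take i).prod⁻¹ * (l.take j).prod = ((l.drop i).take (j - i)).prod := by
    have : l.take j = l.take i ++ (l.drop i).take (j - i) := by
      rw [← List.take_add]
      congr 1; omega
    rw [this, List.prod_append]; group
  have hlen2 : ((l.drop i).take (j - i)).length = j - i := by
    simp [List.length_take, List.length_drop]
    omega
  apply le_antisymm
  · have := wordNorm_le_list S _ ((l.drop i).take (j - i)) (by
      intro s hs
      exact hmem s (List.mem_of_mem_drop (List.mem_of_mem_take hs))) rfl
    rw [hkey]
    omega
  · -- lower bound via triangle pinching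
    by_contra hlt
    push_neg at hlt
    have h1 : wordNorm S ((l.take i).prod) ≤ i := by
      have := wordNorm_le_list S ((l.take i).prod) (l.take i) (by
        intro s hs; exact hmem s (List.mem_of_mem_take hs)) rfl
      calc wordNorm S ((l.take i).prod) ≤ (l.take i).length := this
        _ ≤ i := by simp [List.length_take]
    have h2 : wordNorm S ((l.take j).prod⁻¹ * g) ≤ l.length - j := by
      have hsplit : (l.take j).prod * (l.drop j).prod = g := by
        rw [← List.prod_append, List.take_append_drop, hprod]
      have hdp : (l.take j).prod⁻¹ * g = (l.drop j).prod := by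
        rw [← hsplit]; group
      rw [hdp]
      have := wordNorm_le_list S ((l.drop j).prod) (l.drop j) (by
        intro s hs; exact hmem s (List.mem_of_mem_drop hs)) rfl
      simpa [List.length_drop] using this
    have hg : wordNorm S g ≤ wordNorm S ((l.take i).prod) +
        (wordNorm S ((l.take i).prod⁻¹ * (l.take j).prod) +
         wordNorm S ((l.take j).prod⁻¹ * g)) := by
      have t1 := wordNorm_mul_le S hSsym hSgen ((l.take i).prod)
        (((l.take i).prod⁻¹ * (l.take j).prod) * ((l.take j).prod⁻¹ * g))
      have t2 := wordNorm_mul_le S hSsym hSgen ((l.take i).prod⁻¹ * (l.take j).prod)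
        ((l.take j).prod⁻¹ * g)
      have : (l.take i).prod * (((l.take i).prod⁻¹ * (l.take j).prod) *
          ((l.take j).prod⁻¹ * g)) = g := by group
      rw [this] at t1
      omega
    rw [← hlen] at hg
    omega

end Geo
section Dyadic
variable {Γ : Type*} [Group Γ] (S : Set Γ) (δ : ℝ)

lemma dyadic_chain (hδ : 0 ≤ δ)
    (hhyp : ∀ x y z w : Γ, min (gpW S w x z) (gpW S w z y) - δ ≤ gpW S w x y)
    (p : Γ) (m : ℝ) :
    ∀ c N : ℕ, 1 ≤ N → N ≤ 2 ^ c → ∀ x : ℕ → Γ,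
      (∀ i, i < N → m ≤ gpW S p (x i) (x (i + 1))) →
      m - δ * c ≤ gpW S p (x 0) (x N) := by
  intro c
  induction c with
  | zero =>
    intro N h1 h2 x hx
    have hN : N = 1 := by omega
    subst hN
    simpa using hx 0 (by norm_num)
  | succ c ih =>
    intro N h1 h2 x hx
    by_cases hsmall : N ≤ 2 ^ c
    · have := ih N h1 hsmall x hx
      have : m - δ * (c + 1 : ℕ) ≤ m - δ * c := by
        push_cast; nlinarith
      linarith [ih N h1 hsmall x hx]
    · push_neg at hsmall
      set M := 2 ^ c with hM
      have hM1 : 1 ≤ M := Nat.one_le_two_pow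
      have hMN : M ≤ N := le_of_lt hsmall
      have ha := ih M hM1 le_rfl x (fun i hi => hx i (lt_of_lt_of_le hi hMN))
      have hb := ih (N - M) (by omega) (by
          have : N ≤ 2 ^ (c + 1) := h2
          have h2c : (2:ℕ) ^ (c+1) = 2 ^ c + 2 ^ c := by ring
          omega) (fun i => x (M + i)) (fun i hi => by
          have := hx (M + i) (by omega)
          simpa [Nat.add_assoc] using this)
      have hb2 : m - δ * ↑c ≤ gpW S p (x M) (x N) := by
        simpa [Nat.add_sub_cancel' hMN] using hb
      have hcomb := hhyp (x 0) (x N) (x M) p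
      have hmin := le_min ha hb2
      push_cast
      linarith [hmin, hcomb]
end Dyadic

section NatArith

lemma sq_le_two_pow {x : ℕ} (hx : 4 ≤ x) : x * x ≤ 2 ^ x := by
  induction x with
  | zero => omega
  | succ n ih =>
    rcases Nat.lt_or_ge n 4 with h | h
    · interval_cases n <;> first | omega | norm_num
    · have h1 := ih h
      have h2 : 2 * n + 1 ≤ n * n := by nlinarith
      have : (n+1) * (n+1) = n * n + (2 * n + 1) := by ring
      rw [this, pow_succ]
      omega

lemma nat_arith (A B M E c : ℕ) (hM : 1 ≤ M) (h1 : E ≤ A + B * c)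
    (h2 : 2 ^ (c - 1) < M * (E + 1)) :
    E ≤ A + B * (2 * M * B + 2 * M * (A + B + 1) + 5) := by
  rcases Nat.eq_zero_or_pos c with hc | hc
  · subst hc; simp at h1; exact h1.trans (Nat.le_add_right _ _)
  rcases Nat.eq_zero_or_pos B with hB | hB
  · subst hB; simp at h1; omega
  set x := c - 1 with hx
  have hcx : c = x + 1 := by omega
  rcases Nat.lt_or_ge x 5 with hx5 | hx5
  · have hEb : E ≤ A + B * (x + 1) := by rw [← hcx]; exact h1
    have h10 : B * (x + 1) ≤ B * (2 * M * B + 2 * M * (A + B + 1) + 5) :=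
      Nat.mul_le_mul_left _ (by omega)
    linarith
  · have hsq : x * x ≤ 2 ^ x := sq_le_two_pow (by omega)
    have hkey : x * x < M * (E + 1) := lt_of_le_of_lt hsq h2
    have hE : E ≤ A + B * x + B := by rw [hcx] at h1; nlinarith
    have hEx : x * x < M * (A + B * x + B + 1) := by
      apply lt_of_lt_of_le hkey
      have : E + 1 ≤ A + B * x + B + 1 := by omega
      exact Nat.mul_le_mul_left M this
    have hxbound : x ≤ 2 * M * B + 2 * M * (A + B + 1) + 4 := by
      by_contra hcon
      push_neg at hcon
      have hx1 : 1 ≤ x := by omega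
      have hmul : (2 * M * B + 2 * M * (A + B + 1) + 5) * x ≤ x * x :=
        Nat.mul_le_mul_right x (by omega)
      have hQx : M * (A + B + 1) ≤ M * (A + B + 1) * x :=
        Nat.le_mul_of_pos_right _ hx1
      nlinarith [hmul, hQx, hEx]
    have h9 : B * x + B = B * (x + 1) := by ring
    have h10 : B * (x + 1) ≤ B * (2 * M * B + 2 * M * (A + B + 1) + 5) :=
      Nat.mul_le_mul_left _ (by omega)
    linarith

end NatArith
section Morse
variable {Γ : Type*} [Group Γ] (S : Set Γ)

/-- quasi-geodesic (global, ℤ-indexed) -/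
def IsQG (c₀ c₁ : ℝ) (α : ℤ → Γ) : Prop := ∀ i j : ℤ,
  c₀⁻¹ * |(i:ℝ) - (j:ℝ)| - c₁ ≤ wordDist S (α i) (α j) ∧
    wordDist S (α i) (α j) ≤ c₀ * |(i:ℝ) - (j:ℝ)| + c₁

noncomputable def morseA (δ c₀ c₁ : ℝ) : ℕ := ⌈(c₀ + c₁)/2 + 2*δ⌉₊
noncomputable def morseB (δ : ℝ) : ℕ := ⌈δ⌉₊
noncomputable def morseM (c₀ c₁ : ℝ) : ℕ := ⌈6*c₀ + c₀*c₁⌉₊ + 1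

noncomputable def morseD (δ c₀ c₁ : ℝ) : ℕ :=
  morseA δ c₀ c₁ + morseB δ *
    (2 * morseM c₀ c₁ * morseB δ +
      2 * morseM c₀ c₁ * (morseA δ c₀ c₁ + morseB δ + 1) + 5) + ⌈4*δ⌉₊ + 1

variable (hSsym : ∀ s ∈ S, s⁻¹ ∈ S) (hSgen : Subgroup.closure S = ⊤)
  {δ c₀ c₁ : ℝ} (hδ : 0 ≤ δ) (hc₀ : 0 < c₀) (hc₁ : 0 ≤ c₁)
  (hhyp : ∀ x y z w : Γ, min (gpW S w x z) (gpW S w z y) - δ ≤ gpW S w x y)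

include hSsym hSgen hδ hc₀ hc₁ hhyp

set_option maxHeartbeats 1000000 in
lemma morse_M1 (α : ℤ → Γ) (hα : IsQG S c₀ c₁ α) (a b : ℤ) (hab : a ≤ b)
    (q : ℕ → Γ) (T : ℕ) (hgeo : IsGeo S q T) (hq0 : q 0 = α a) (hqT : q T = α b) :
    ∀ i, i ≤ T → ∃ t ∈ Finset.Icc a b, wordDist S (q i) (α t) ≤ (morseD δ c₀ c₁ : ℝ) := by
  classical
  have hIcc : (Finset.Icc a b).Nonempty := ⟨a, by simp [hab]⟩
  set e : ℕ → ℕ := fun i => (Finset.Icc a b).inf' hIcc (fun t => wordNorm S ((q i)⁻¹ * α t))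
    with he
  have hrange : (Finset.range (T+1)).Nonempty := ⟨0, by simp⟩
  set E : ℕ := (Finset.range (T+1)).sup' hrange e with hE
  -- it suffices to bound E
  suffices hEbound : E ≤ morseD δ c₀ c₁ by
    intro i hi
    obtain ⟨t, ht, hte⟩ := Finset.exists_mem_eq_inf' hIcc (fun t => wordNorm S ((q i)⁻¹ * α t))
    refine ⟨t, ht, ?_⟩
    have h1 : e i ≤ E := Finset.le_sup' e (Finset.mem_range.mpr (by omega))
    have h2 : wordNorm S ((q i)⁻¹ * α t) = e i := by rw [he]; exact hte.symm
    rw [wordDist_eq, h2]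
    exact_mod_cast le_trans h1 hEbound
  -- choose the worst geodesic point
  obtain ⟨j₀, hj₀mem, hj₀⟩ := Finset.exists_mem_eq_sup' hrange e
  have hj₀T : j₀ ≤ T := by simpa [Nat.lt_succ_iff] using hj₀mem
  set p₀ : Γ := q j₀ with hp₀
  -- all α-points on [a,b] are at distance ≥ E from p₀
  have hEprop : ∀ t ∈ Finset.Icc a b, (E:ℝ) ≤ wordDist S p₀ (α t) := by
    intro t ht
    have h3 : e j₀ ≤ wordNorm S ((q j₀)⁻¹ * α t) :=
      Finset.inf'_le (fun t => wordNorm S ((q j₀)⁻¹ * α t)) ht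
    rw [← hj₀] at h3
    rw [wordDist_eq]
    exact_mod_cast h3
  by_cases hE0 : E = 0
  · rw [hE0]; positivity
  have hE1 : 1 ≤ E := Nat.one_le_iff_ne_zero.mpr hE0
  -- the left side point
  have hleft : ∃ (j₁ : ℕ) (t₁ : ℤ), j₁ ≤ j₀ ∧ j₀ - j₁ ≤ 2*E ∧ t₁ ∈ Finset.Icc a b ∧
      wordDist S (q j₁) (α t₁) ≤ (E:ℝ) ∧ (E:ℝ)/2 ≤ gpW S p₀ (q j₁) (α t₁) ∧
      wordDist S p₀ (q j₁) = (j₀ : ℝ) - (j₁ : ℝ) := by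
    by_cases hcase : 2*E ≤ j₀
    · obtain ⟨t₁, ht₁, hte⟩ := Finset.exists_mem_eq_inf' hIcc
        (fun t => wordNorm S ((q (j₀ - 2*E))⁻¹ * α t))
      have hd1 : wordDist S (q (j₀ - 2*E)) (α t₁) ≤ (E:ℝ) := by
        rw [wordDist_eq, ← hte]
        have h1 : e (j₀ - 2*E) ≤ E := Finset.le_sup' e (Finset.mem_range.mpr (by omega))
        rw [he] at h1
        exact_mod_cast h1
      have hdq : wordDist S p₀ (q (j₀ - 2*E)) = (j₀ : ℝ) - ((j₀ - 2*E : ℕ) : ℝ) := by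
        rw [wordDist_comm S hSsym hSgen, hp₀]
        exact isGeo_dist S hgeo (by omega) hj₀T
      refine ⟨j₀ - 2*E, t₁, by omega, by omega, ht₁, hd1, ?_, hdq⟩
      have hge := gpW_ge_min S p₀ (q (j₀ - 2*E)) (α t₁)
      have hd2 : (E:ℝ) ≤ wordDist S p₀ (α t₁) := hEprop t₁ ht₁
      have hd3 : (j₀ : ℝ) - ((j₀ - 2*E : ℕ) : ℝ) = 2*(E:ℝ) := by
        rw [Nat.cast_sub hcase]; push_cast; ring
      rw [hd3] at hdq
      rcases le_total (wordDist S p₀ (q (j₀ - 2*E))) (wordDist S p₀ (α t₁)) with hc | hc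
      · rw [min_eq_left hc, hdq] at hge
        have hEnn : (0:ℝ) ≤ (E:ℝ) := Nat.cast_nonneg E
        linarith
      · rw [min_eq_right hc] at hge; linarith
    · refine ⟨0, a, Nat.zero_le _, by omega, Finset.mem_Icc.mpr ⟨le_rfl, hab⟩, ?_, ?_, ?_⟩
      · rw [hq0, wordDist_self]; positivity
      · rw [hq0, gpW_eq, wordDist_self]
        have hd2 := hEprop a (Finset.mem_Icc.mpr ⟨le_rfl, hab⟩)
        linarith
      · rw [wordDist_comm S hSsym hSgen, hp₀]
        simpa using isGeo_dist S hgeo (Nat.zero_le j₀) hj₀T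
  -- the right side point
  have hright : ∃ (j₂ : ℕ) (t₂ : ℤ), j₀ ≤ j₂ ∧ j₂ ≤ T ∧ j₂ - j₀ ≤ 2*E ∧ t₂ ∈ Finset.Icc a b ∧
      wordDist S (q j₂) (α t₂) ≤ (E:ℝ) ∧ (E:ℝ)/2 ≤ gpW S p₀ (q j₂) (α t₂) ∧
      wordDist S p₀ (q j₂) = (j₂ : ℝ) - (j₀ : ℝ) := by
    by_cases hcase : j₀ + 2*E ≤ T
    · obtain ⟨t₂, ht₂, hte⟩ := Finset.exists_mem_eq_inf' hIcc
        (fun t => wordNorm S ((q (j₀ + 2*E))⁻¹ * α t))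
      have hd1 : wordDist S (q (j₀ + 2*E)) (α t₂) ≤ (E:ℝ) := by
        rw [wordDist_eq, ← hte]
        have h1 : e (j₀ + 2*E) ≤ E := Finset.le_sup' e (Finset.mem_range.mpr (by omega))
        rw [he] at h1
        exact_mod_cast h1
      have hdq : wordDist S p₀ (q (j₀ + 2*E)) = ((j₀ + 2*E : ℕ) : ℝ) - (j₀ : ℝ) := by
        rw [hp₀]
        exact isGeo_dist S hgeo (by omega) hcase
      refine ⟨j₀ + 2*E, t₂, by omega, hcase, by omega, ht₂, hd1, ?_, hdq⟩
      have hge := gpW_ge_min S p₀ (q (j₀ + 2*E)) (α t₂)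
      have hd2 : (E:ℝ) ≤ wordDist S p₀ (α t₂) := hEprop t₂ ht₂
      have hd3 : ((j₀ + 2*E : ℕ) : ℝ) - (j₀ : ℝ) = 2*(E:ℝ) := by
        push_cast; ring
      rw [hd3] at hdq
      rcases le_total (wordDist S p₀ (q (j₀ + 2*E))) (wordDist S p₀ (α t₂)) with hc | hc
      · rw [min_eq_left hc, hdq] at hge
        have hEnn : (0:ℝ) ≤ (E:ℝ) := Nat.cast_nonneg E
        linarith
      · rw [min_eq_right hc] at hge; linarith
    · refine ⟨T, b, hj₀T, le_rfl, by omega, Finset.mem_Icc.mpr ⟨hab, le_rfl⟩, ?_, ?_, ?_⟩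
      · rw [hqT, wordDist_self]; positivity
      · rw [hqT, gpW_eq, wordDist_self]
        have hd2 := hEprop b (Finset.mem_Icc.mpr ⟨hab, le_rfl⟩)
        linarith
      · rw [hp₀]
        exact isGeo_dist S hgeo hj₀T le_rfl
  obtain ⟨j₁, t₁, hj₁le, hj₁gap, ht₁mem, hd₁, hgp₁, hdq₁⟩ := hleft
  obtain ⟨j₂, t₂, hj₂ge, hj₂T, hj₂gap, ht₂mem, hd₂, hgp₂, hdq₂⟩ := hright
  -- the middle chain estimate
  set N : ℕ := (t₂ - t₁).natAbs with hN
  set ε : ℤ := if t₁ ≤ t₂ then 1 else -1 with hε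
  have hparam : ∀ i : ℕ, i ≤ N → t₁ + ε * i ∈ Finset.Icc a b := by
    intro i hi
    rw [Finset.mem_Icc] at ht₁mem ht₂mem ⊢
    rw [hε]
    split_ifs with h <;> omega
  have hstep : ∀ i : ℕ, i < N →
      (E:ℝ) - (c₀ + c₁)/2 ≤ gpW S p₀ (α (t₁ + ε * i)) (α (t₁ + ε * (i+1))) := by
    intro i hi
    have h1 : (E:ℝ) ≤ wordDist S p₀ (α (t₁ + ε * i)) := hEprop _ (hparam i (by omega))
    have h2 : (E:ℝ) ≤ wordDist S p₀ (α (t₁ + ε * (i+1))) :=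
      hEprop _ (hparam (i+1) (by omega))
    have h3 : wordDist S (α (t₁ + ε * i)) (α (t₁ + ε * (i+1))) ≤ c₀ + c₁ := by
      have h5 := (hα (t₁ + ε * i) (t₁ + ε * (i+1))).2
      have habs : |((t₁ + ε * i : ℤ):ℝ) - ((t₁ + ε * (i+1) : ℤ):ℝ)| = 1 := by
        have h6 : ((t₁ + ε * i : ℤ):ℝ) - ((t₁ + ε * (i+1) : ℤ):ℝ) = -(ε:ℝ) := by
          push_cast; ring
        rw [h6, abs_neg, hε]
        split_ifs <;> simp
      rw [habs] at h5
      linarith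
    have hge := gpW_ge_min S p₀ (α (t₁ + ε * i)) (α (t₁ + ε * (i+1)))
    rcases le_total (wordDist S p₀ (α (t₁ + ε * i))) (wordDist S p₀ (α (t₁ + ε * (i+1))))
      with hc | hc
    · rw [min_eq_left hc] at hge; linarith
    · rw [min_eq_right hc] at hge; linarith
  have hxN : t₁ + ε * (N:ℤ) = t₂ := by
    rw [hε]
    split_ifs with h <;> omega
  set c : ℕ := Nat.clog 2 N with hc
  have hmid : (E:ℝ) - (c₀ + c₁)/2 - δ * c ≤ gpW S p₀ (α t₁) (α t₂) := by
    by_cases hN0 : N = 0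
    · have ht12 : t₂ = t₁ := by omega
      rw [ht12, gpW_eq, wordDist_self]
      have h1 := hEprop t₁ ht₁mem
      have hcn : (0:ℝ) ≤ δ * c := by positivity
      linarith
    · have hdy := dyadic_chain S δ hδ hhyp p₀ ((E:ℝ) - (c₀ + c₁)/2) c N
        (Nat.one_le_iff_ne_zero.mpr hN0) (Nat.le_pow_clog (by norm_num) N)
        (fun i => α (t₁ + ε * i)) hstep
      simp only [Nat.cast_zero, mul_zero, add_zero] at hdy
      rw [hxN] at hdy
      simpa using hdy
  -- gluing: the Gromov product of the two geodesic points at p₀ vanishes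
  have hzero : gpW S p₀ (q j₁) (q j₂) = 0 := by
    have hd12 : wordDist S (q j₁) (q j₂) = (j₂:ℝ) - (j₁:ℝ) :=
      isGeo_dist S hgeo (by omega) hj₂T
    rw [gpW_eq, hdq₁, hdq₂, hd12]
    ring
  -- combine with hyperbolicity
  have hA := hhyp (q j₁) (q j₂) (α t₁) p₀
  have hB := hhyp (α t₁) (q j₂) (α t₂) p₀
  rw [hzero] at hA
  have hcomm : gpW S p₀ (α t₂) (q j₂) = gpW S p₀ (q j₂) (α t₂) :=
    gpW_comm S hSsym hSgen p₀ (α t₂) (q j₂)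
  have hfinal : (E:ℝ) ≤ 4*δ ∨ (E:ℝ) ≤ (c₀ + c₁)/2 + 2*δ + δ * c := by
    rcases le_total (gpW S p₀ (q j₁) (α t₁)) (gpW S p₀ (α t₁) (q j₂)) with h1 | h1
    · rw [min_eq_left h1] at hA
      left; linarith
    · rw [min_eq_right h1] at hA
      rcases le_total (gpW S p₀ (α t₁) (α t₂)) (gpW S p₀ (α t₂) (q j₂)) with h2 | h2
      · rw [min_eq_left h2] at hB
        right; linarith
      · rw [min_eq_right h2, hcomm] at hB
        left; linarith
  -- now the nat arithmetic
  rcases hfinal with hf | hf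
  · have h1 : (E:ℝ) ≤ (⌈4*δ⌉₊ : ℝ) := le_trans hf (Nat.le_ceil _)
    have h2 : E ≤ ⌈4*δ⌉₊ := by exact_mod_cast h1
    unfold morseD
    omega
  · -- N is linearly bounded by E
    have hNbound : N ≤ morseM c₀ c₁ * (E+1) := by
      have hlow := (hα t₁ t₂).1
      have habs : |(t₁:ℝ) - (t₂:ℝ)| = (N:ℝ) := by
        rw [hN]
        rw [Nat.cast_natAbs]
        push_cast
        rw [abs_sub_comm]
      rw [habs] at hlow
      have hdt : wordDist S (α t₁) (α t₂) ≤ 6*(E:ℝ) := by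
        have htr1 := wordDist_triangle S hSsym hSgen (α t₁) (q j₁) (α t₂)
        have htr2 := wordDist_triangle S hSsym hSgen (q j₁) (q j₂) (α t₂)
        have hsym1 := wordDist_comm S hSsym hSgen (α t₁) (q j₁)
        have hd12 : wordDist S (q j₁) (q j₂) = (j₂:ℝ) - (j₁:ℝ) :=
          isGeo_dist S hgeo (by omega) hj₂T
        have hj12 : (j₂:ℝ) - (j₁:ℝ) ≤ 4*(E:ℝ) := by
          have h9 : j₂ ≤ j₁ + 4*E := by omega
          have h10 : (j₂:ℝ) ≤ (j₁:ℝ) + 4*(E:ℝ) := by exact_mod_cast h9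
          linarith
        linarith
      have hM1 : (6*c₀ + c₀*c₁ : ℝ) ≤ (morseM c₀ c₁ : ℝ) := by
        unfold morseM
        push_cast
        linarith [Nat.le_ceil (6*c₀ + c₀*c₁)]
      have hNreal : (N:ℝ) ≤ (morseM c₀ c₁ : ℝ) * ((E:ℝ)+1) := by
        have hc₀inv : (0:ℝ) < c₀⁻¹ := by positivity
        have h7 : (N:ℝ) ≤ c₀ * (6*(E:ℝ) + c₁) := by
          have h8 : c₀⁻¹ * (N:ℝ) ≤ 6*(E:ℝ) + c₁ := by linarith
          calc (N:ℝ) = c₀ * (c₀⁻¹ * (N:ℝ)) := by field_simp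
            _ ≤ c₀ * (6*(E:ℝ) + c₁) := mul_le_mul_of_nonneg_left h8 hc₀.le
        have hEnn : (0:ℝ) ≤ (E:ℝ) := Nat.cast_nonneg E
        have hMnn : (0:ℝ) ≤ (morseM c₀ c₁ : ℝ) := Nat.cast_nonneg _
        have hh1 : (6*c₀ + c₀*c₁) * ((E:ℝ)+1) ≤ (morseM c₀ c₁ : ℝ) * ((E:ℝ)+1) :=
          mul_le_mul_of_nonneg_right hM1 (by linarith)
        have hh2 : (0:ℝ) ≤ c₀ * c₁ * (E:ℝ) := mul_nonneg (mul_nonneg hc₀.le hc₁) hEnn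
        nlinarith [hh1, hh2, h7, hc₀.le]
      have : (N:ℝ) ≤ ((morseM c₀ c₁ * (E+1) : ℕ) : ℝ) := by push_cast; push_cast at hNreal; linarith
      exact_mod_cast this
    set c' : ℕ := Nat.clog 2 (morseM c₀ c₁ * (E+1)) with hc'
    have hcc : c ≤ c' := Nat.clog_mono_right 2 hNbound
    have hEA : E ≤ morseA δ c₀ c₁ + morseB δ * c' := by
      have h1 : ((c₀+c₁)/2 + 2*δ : ℝ) ≤ (morseA δ c₀ c₁ : ℝ) := Nat.le_ceil _
      have h2 : (δ:ℝ) ≤ (morseB δ : ℝ) := Nat.le_ceil _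
      have h3 : (c:ℝ) ≤ (c':ℝ) := by exact_mod_cast hcc
      have h4 : δ * (c:ℝ) ≤ (morseB δ : ℝ) * (c':ℝ) :=
        mul_le_mul h2 h3 (Nat.cast_nonneg c) (Nat.cast_nonneg _)
      have h5 : (E:ℝ) ≤ (morseA δ c₀ c₁ : ℝ) + (morseB δ : ℝ) * (c':ℝ) := by linarith
      have h6 : (E:ℝ) ≤ ((morseA δ c₀ c₁ + morseB δ * c' : ℕ) : ℝ) := by push_cast; linarith
      exact_mod_cast h6
    have hpow : 2 ^ (c' - 1) < morseM c₀ c₁ * (E+1) := by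
      apply Nat.pow_pred_clog_lt_self (by norm_num)
      have hM1 : 1 ≤ morseM c₀ c₁ := by unfold morseM; omega
      calc 1 < 2 := by norm_num
        _ = 1 * 2 := by ring
        _ ≤ morseM c₀ c₁ * (E+1) := Nat.mul_le_mul hM1 (by omega)
    have harith := nat_arith (morseA δ c₀ c₁) (morseB δ) (morseM c₀ c₁) E c'
      (by unfold morseM; omega) hEA hpow
    unfold morseD
    omega
end Morse
section Morse2
variable {Γ : Type*} [Group Γ] (S : Set Γ)

noncomputable def morseD2 (δ c₀ c₁ : ℝ) : ℝ :=
  c₀ * (c₀ * (2*(morseD δ c₀ c₁:ℝ) + 1 + c₁)) + c₁ + (morseD δ c₀ c₁:ℝ)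

variable (hSsym : ∀ s ∈ S, s⁻¹ ∈ S) (hSgen : Subgroup.closure S = ⊤)
  {δ c₀ c₁ : ℝ} (hδ : 0 ≤ δ) (hc₀ : 0 < c₀) (hc₁ : 0 ≤ c₁)
  (hhyp : ∀ x y z w : Γ, min (gpW S w x z) (gpW S w z y) - δ ≤ gpW S w x y)

include hSsym hSgen hδ hc₀ hc₁ hhyp

set_option maxHeartbeats 1000000 in
lemma morse_M2 (α : ℤ → Γ) (hα : IsQG S c₀ c₁ α) (a b : ℤ) (hab : a ≤ b)
    (q : ℕ → Γ) (T : ℕ) (hgeo : IsGeo S q T) (hq0 : q 0 = α a) (hqT : q T = α b) :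
    ∀ s : ℤ, a ≤ s → s ≤ b → ∃ i, i ≤ T ∧
      wordDist S (α s) (q i) ≤ morseD2 δ c₀ c₁ := by
  classical
  intro s has hsb
  set D₁ : ℝ := (morseD δ c₀ c₁ : ℝ) with hD₁
  have hD₁nn : 0 ≤ D₁ := Nat.cast_nonneg _
  have hM1 := morse_M1 S hSsym hSgen hδ hc₀ hc₁ hhyp α hα a b hab q T hgeo hq0 hqT
  have hex : ∀ i : ℕ, ∃ tt : ℤ, (i ≤ T → tt ∈ Finset.Icc a b ∧
      wordDist S (q i) (α tt) ≤ D₁) := by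
    intro i
    by_cases hi : i ≤ T
    · obtain ⟨tt, h1, h2⟩ := hM1 i hi
      exact ⟨tt, fun _ => ⟨h1, h2⟩⟩
    · exact ⟨a, fun h => absurd h hi⟩
  choose t0 ht0 using hex
  by_cases hT0 : T = 0
  · refine ⟨0, Nat.zero_le _, ?_⟩
    have hab0 : wordDist S (α a) (α b) = 0 := by
      rw [← hq0, ← hqT, hT0, wordDist_self]
    have hlow := (hα a b).1
    have habs : |(a:ℝ) - (b:ℝ)| ≤ c₀ * c₁ := by
      have h8 : c₀⁻¹ * |(a:ℝ) - (b:ℝ)| ≤ c₁ := by linarith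
      calc |(a:ℝ) - (b:ℝ)| = c₀ * (c₀⁻¹ * |(a:ℝ) - (b:ℝ)|) := by field_simp
        _ ≤ c₀ * c₁ := mul_le_mul_of_nonneg_left h8 hc₀.le
    have hsa : |(s:ℝ) - (a:ℝ)| ≤ c₀ * c₁ := by
      have h1 : (a:ℝ) ≤ (s:ℝ) := by exact_mod_cast has
      have h2 : (s:ℝ) ≤ (b:ℝ) := by exact_mod_cast hsb
      have h3 : (a:ℝ) ≤ (b:ℝ) := le_trans h1 h2
      rw [abs_of_nonneg (by linarith)]
      rw [abs_of_nonpos (by linarith)] at habs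
      linarith
    have hup := (hα s a).2
    have hmul := mul_le_mul_of_nonneg_left hsa hc₀.le
    have hds : wordDist S (α s) (q 0) = wordDist S (α s) (α a) := by rw [hq0]
    rw [hds]
    rw [show morseD2 δ c₀ c₁ = c₀ * (c₀ * (2*D₁ + 1 + c₁)) + c₁ + D₁ from rfl]
    nlinarith [hD₁nn, hc₀.le, hc₁, mul_nonneg hc₀.le hc₀.le]
  set t : ℕ → ℤ := fun i => if i = 0 then a else if i = T then b else t0 i with ht
  have ht00 : t 0 = a := by simp [ht]
  have htTT : t T = b := by
    rw [ht]; simp [hT0]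
  have htprop : ∀ i, i ≤ T → t i ∈ Finset.Icc a b ∧ wordDist S (q i) (α (t i)) ≤ D₁ := by
    intro i hi
    by_cases h0 : i = 0
    · subst h0
      rw [ht00]
      exact ⟨Finset.mem_Icc.mpr ⟨le_rfl, hab⟩, by rw [hq0, wordDist_self]; exact hD₁nn⟩
    by_cases hT : i = T
    · subst hT
      rw [htTT]
      exact ⟨Finset.mem_Icc.mpr ⟨hab, le_rfl⟩, by rw [hqT, wordDist_self]; exact hD₁nn⟩
    · have heq : t i = t0 i := by rw [ht]; simp [h0, hT]
      rw [heq]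
      exact ht0 i hi
  set J : ℝ := c₀ * (2*D₁ + 1 + c₁) with hJ
  have hadj : ∀ i, i + 1 ≤ T → |((t (i+1) : ℤ):ℝ) - ((t i : ℤ):ℝ)| ≤ J := by
    intro i hi
    have h1 := (htprop i (by omega)).2
    have h2 := (htprop (i+1) hi).2
    have h3 : wordDist S (q i) (q (i+1)) = ((i:ℝ)+1) - i := by
      have := isGeo_dist S hgeo (by omega : i ≤ i + 1) hi
      push_cast at this ⊢
      linarith
    have htri1 := wordDist_triangle S hSsym hSgen (α (t i)) (q i) (α (t (i+1)))
    have htri2 := wordDist_triangle S hSsym hSgen (q i) (q (i+1)) (α (t (i+1)))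
    have hsym := wordDist_comm S hSsym hSgen (q i) (α (t i))
    have hlow := (hα (t i) (t (i+1))).1
    have habs : |((t i : ℤ):ℝ) - ((t (i+1) : ℤ):ℝ)| = |((t (i+1) : ℤ):ℝ) - ((t i : ℤ):ℝ)| :=
      abs_sub_comm _ _
    rw [habs] at hlow
    have hd : wordDist S (α (t i)) (α (t (i+1))) ≤ 2*D₁ + 1 := by linarith
    have h8 : c₀⁻¹ * |((t (i+1) : ℤ):ℝ) - ((t i : ℤ):ℝ)| ≤ 2*D₁ + 1 + c₁ := by linarith
    calc |((t (i+1) : ℤ):ℝ) - ((t i : ℤ):ℝ)|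
        = c₀ * (c₀⁻¹ * |((t (i+1) : ℤ):ℝ) - ((t i : ℤ):ℝ)|) := by field_simp
      _ ≤ c₀ * (2*D₁ + 1 + c₁) := mul_le_mul_of_nonneg_left h8 hc₀.le
  -- discrete intermediate value
  have hQT : T ≤ T ∨ s ≤ t T := Or.inl le_rfl
  have hQex : ∃ i, T ≤ i ∨ s ≤ t i := ⟨T, hQT⟩
  set i₀ : ℕ := Nat.find hQex with hi₀
  have hi₀T : i₀ ≤ T := Nat.find_le hQT
  have hi₀Q : T ≤ i₀ ∨ s ≤ t i₀ := Nat.find_spec hQex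
  have hsle : s ≤ t i₀ := by
    rcases hi₀Q with h | h
    · have : i₀ = T := le_antisymm hi₀T h
      rw [this, htTT]; exact hsb
    · exact h
  by_cases hi₀0 : i₀ = 0
  · -- s = a
    have hsa : s = a := le_antisymm (by rw [hi₀0, ht00] at hsle; exact hsle) has
    refine ⟨0, Nat.zero_le _, ?_⟩
    rw [hsa, hq0, wordDist_self]
    have : (0:ℝ) ≤ morseD2 δ c₀ c₁ := by
      rw [show morseD2 δ c₀ c₁ = c₀ * (c₀ * (2*D₁ + 1 + c₁)) + c₁ + D₁ from rfl]
      positivity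
    exact this
  · have hi₀1 : 1 ≤ i₀ := by omega
    have hprev : ¬ (T ≤ i₀ - 1 ∨ s ≤ t (i₀ - 1)) := Nat.find_min hQex (by omega)
    push_neg at hprev
    obtain ⟨hprevT, hprevs⟩ := hprev
    have hgap : ((t i₀ : ℤ):ℝ) - (s:ℝ) ≤ J := by
      have h1 : t (i₀ - 1) + 1 ≤ s := hprevs
      have h2 := hadj (i₀ - 1) (by omega)
      have h3 : i₀ - 1 + 1 = i₀ := by omega
      rw [h3] at h2
      have h4 : ((t i₀ : ℤ):ℝ) - ((t (i₀-1) : ℤ):ℝ) ≤ |((t i₀ : ℤ):ℝ) - ((t (i₀-1) : ℤ):ℝ)| :=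
        le_abs_self _
      have h5 : ((t (i₀-1) : ℤ):ℝ) + 1 ≤ (s:ℝ) := by exact_mod_cast h1
      linarith
    have hgap0 : (0:ℝ) ≤ ((t i₀ : ℤ):ℝ) - (s:ℝ) := by
      have : (s:ℝ) ≤ ((t i₀ : ℤ):ℝ) := by exact_mod_cast hsle
      linarith
    refine ⟨i₀, hi₀T, ?_⟩
    have htri := wordDist_triangle S hSsym hSgen (α s) (α (t i₀)) (q i₀)
    have hup := (hα s (t i₀)).2
    have habs : |(s:ℝ) - ((t i₀ : ℤ):ℝ)| ≤ J := by
      rw [abs_sub_comm, abs_of_nonneg hgap0]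
      exact hgap
    have hd2 := (htprop i₀ hi₀T).2
    have hsym := wordDist_comm S hSsym hSgen (q i₀) (α (t i₀))
    have hJnn : 0 ≤ |(s:ℝ) - ((t i₀ : ℤ):ℝ)| := abs_nonneg _
    have hup2 : wordDist S (α s) (α (t i₀)) ≤ c₀ * J + c₁ := by
      have := mul_le_mul_of_nonneg_left habs hc₀.le
      linarith
    rw [show morseD2 δ c₀ c₁ = c₀ * (c₀ * (2*D₁ + 1 + c₁)) + c₁ + D₁ from rfl]
    rw [hJ] at hup2
    linarith

set_option maxHeartbeats 1000000 in
lemma morse_M3 (α : ℤ → Γ) (hα : IsQG S c₀ c₁ α) (a b s : ℤ) (has : a ≤ s) (hsb : s ≤ b) :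
    gpW S (α s) (α a) (α b) ≤ morseD2 δ c₀ c₁ := by
  obtain ⟨q0, hq00, hq0T, hq0geo⟩ := exists_geodesic S hSsym hSgen ((α a)⁻¹ * (α b))
  set T : ℕ := wordNorm S ((α a)⁻¹ * (α b)) with hT
  set q : ℕ → Γ := fun i => α a * q0 i with hq
  have hgeo : IsGeo S q T := isGeo_translate S (α a) hq0geo
  have hqa : q 0 = α a := by rw [hq]; simp [hq00]
  have hqb : q T = α b := by
    rw [hq]; simp only [hq0T]; group
  obtain ⟨i, hiT, hdi⟩ := morse_M2 S hSsym hSgen hδ hc₀ hc₁ hhyp α hα a b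
    (le_trans has hsb) q T hgeo hqa hqb s has hsb
  have hzero : gpW S (q i) (α a) (α b) = 0 := by
    have h1 : wordDist S (q i) (α a) = (i:ℝ) := by
      rw [← hqa, wordDist_comm S hSsym hSgen]
      have := isGeo_dist S hgeo (Nat.zero_le i) hiT
      simpa using this
    have h2 : wordDist S (q i) (α b) = (T:ℝ) - i := by
      rw [← hqb]
      exact isGeo_dist S hgeo hiT le_rfl
    have h3 : wordDist S (α a) (α b) = (T:ℝ) := by
      rw [← hqa, ← hqb]
      have := isGeo_dist S hgeo (Nat.zero_le T) le_rfl
      simpa using this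
    rw [gpW_eq, h1, h2, h3]
    ring
  have hlip := gpW_base_lipschitz S hSsym hSgen (α s) (q i) (α a) (α b)
  rw [hzero] at hlip
  linarith

/-- any point is close to a geodesic, within its Gromov product plus a constant -/
lemma geo_shadow (q : ℕ → Γ) (T : ℕ) (hgeo : IsGeo S q T) (p : Γ) :
    ∃ i, i ≤ T ∧ wordDist S p (q i) ≤ gpW S p (q 0) (q T) + 2*δ + 2 := by
  classical
  set ρ : ℝ := gpW S p (q 0) (q T) with hρ
  have hgpd : ∀ j, j ≤ T → gpW S p (q j) (q j) = wordDist S p (q j) := by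
    intro j hj
    rw [gpW_eq, wordDist_self]
    ring
  by_cases hPbT : gpW S p (q T) (q T) ≤ ρ + δ
  · refine ⟨T, le_rfl, ?_⟩
    rw [← hgpd T le_rfl]
    linarith
  · have hQex : ∃ i, ¬ gpW S p (q i) (q T) ≤ ρ + δ := ⟨T, hPbT⟩
    set i₁ : ℕ := Nat.find hQex with hi₁
    have hi₁spec : ¬ gpW S p (q i₁) (q T) ≤ ρ + δ := Nat.find_spec hQex
    have hi₁T : i₁ ≤ T := Nat.find_le hPbT
    have hi₁0 : i₁ ≠ 0 := by
      intro h0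
      apply hi₁spec
      rw [h0]
      have : gpW S p (q 0) (q T) = ρ := rfl
      rw [this]
      linarith
    have hi₁1 : 1 ≤ i₁ := by omega
    have hprev : gpW S p (q (i₁ - 1)) (q T) ≤ ρ + δ := by
      by_contra hcon
      exact Nat.find_min hQex (by omega : i₁ - 1 < i₁) hcon
    -- dichotomy at i₁
    have hdich := hhyp (q 0) (q T) (q i₁) p
    have hA : gpW S p (q 0) (q i₁) ≤ ρ + δ := by
      by_contra hcon
      push_neg at hcon
      push_neg at hi₁spec
      rcases le_total (gpW S p (q 0) (q i₁)) (gpW S p (q i₁) (q T)) with h | h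
      · rw [min_eq_left h] at hdich
        rw [← hρ] at hdich
        linarith
      · rw [min_eq_right h] at hdich
        rw [← hρ] at hdich
        linarith
    -- move one step back
    have hstep : wordDist S (q i₁) (q (i₁ - 1)) = 1 := by
      have := isGeo_dist S hgeo (by omega : i₁ - 1 ≤ i₁) hi₁T
      rw [wordDist_comm S hSsym hSgen]
      rw [this]
      have : ((i₁:ℝ)) - ((i₁ - 1 : ℕ):ℝ) = 1 := by
        rw [Nat.cast_sub hi₁1]
        ring
      linarith [this]
    have hlip := gpW_arg_lipschitz S hSsym hSgen p (q 0) (q (i₁ - 1)) (q i₁)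
    have hsymd : wordDist S (q (i₁-1)) (q i₁) = 1 := by
      rw [wordDist_comm S hSsym hSgen]
      exact hstep
    have hA' : gpW S p (q 0) (q (i₁ - 1)) ≤ ρ + δ + 1 := by
      rw [hsymd] at hlip
      linarith
    -- sum identity
    set i : ℕ := i₁ - 1 with hi
    have hiT : i ≤ T := by omega
    have hsum : gpW S p (q 0) (q i) + gpW S p (q i) (q T) = wordDist S p (q i) + ρ := by
      have h1 : wordDist S (q 0) (q i) = (i:ℝ) := by
        have := isGeo_dist S hgeo (Nat.zero_le i) hiT
        simpa using this
      have h2 : wordDist S (q i) (q T) = (T:ℝ) - i := isGeo_dist S hgeo hiT le_rfl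
      have h3 : wordDist S (q 0) (q T) = (T:ℝ) := by
        have := isGeo_dist S hgeo (Nat.zero_le T) le_rfl
        simpa using this
      rw [hρ, gpW_eq, gpW_eq, gpW_eq, h1, h2, h3]
      ring
    refine ⟨i, hiT, ?_⟩
    have := hsum
    linarith [hA', hprev, hsum]
end Morse2
section Ball
variable {Γ : Type*} [Group Γ] (S : Set Γ)
  (hSsym : ∀ s ∈ S, s⁻¹ ∈ S) (hSgen : Subgroup.closure S = ⊤)

include hSsym hSgen in
lemma ball_finite (hSfin : S.Finite) (D : ℕ) : {g : Γ | wordNorm S g ≤ D}.Finite := by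
  induction D with
  | zero =>
    apply Set.Finite.subset (Set.finite_singleton (1 : Γ))
    intro g hg
    simp only [Set.mem_setOf_eq, Nat.le_zero] at hg
    simp [wordNorm_eq_zero S hSsym hSgen g hg]
  | succ D ih =>
    apply Set.Finite.subset (Set.Finite.union ih
      (Set.Finite.biUnion hSfin (fun s _ => Set.Finite.image (fun g => g * s) ih)))
    intro g hg
    simp only [Set.mem_setOf_eq] at hg
    by_cases hD : wordNorm S g ≤ D
    · exact Or.inl hD
    · right
      obtain ⟨l, hlen, hmem, hprod⟩ := wordNorm_exists_list S hSsym hSgen g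
      have hlne : l ≠ [] := by
        intro h
        rw [h] at hlen
        simp at hlen
        omega
      have hsplit : l.dropLast ++ [l.getLast hlne] = l := List.dropLast_append_getLast hlne
      refine Set.mem_biUnion (hmem (l.getLast hlne) (List.getLast_mem hlne)) ?_
      refine ⟨l.dropLast.prod, ?_, ?_⟩
      · simp only [Set.mem_setOf_eq]
        have h1 : wordNorm S l.dropLast.prod ≤ l.dropLast.length :=
          wordNorm_le_list S _ _ (fun s hs => hmem s (List.mem_of_mem_dropLast hs)) rfl
        have h2 : l.dropLast.length = l.length - 1 := List.length_dropLast
        omega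
      · have hpr : (l.dropLast ++ [l.getLast hlne]).prod = g := by rw [hsplit, hprod]
        rw [List.prod_append] at hpr
        simpa using hpr
end Ball

/-- `O(z,w,R) = {y : (z|y)_w ≤ R}`. -/
def Oset {Γ : Type*} [Group Γ] (S : Set Γ) (z w : Γ) (R : ℝ) : Set Γ :=
  {y | gpW S w z y ≤ R}

/-- `U(x⁻¹,x,R) = {z : z⁻¹ ∈ O(o,x⁻¹,R), z ∈ O(o,x,R)}`. -/
def Uset {Γ : Type*} [Group Γ] (S : Set Γ) (x : Γ) (R : ℝ) : Set Γ :=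
  {z | z⁻¹ ∈ Oset S 1 x⁻¹ R ∧ z ∈ Oset S 1 x R}

section Loc
variable {Γ : Type*} [Group Γ] (S : Set Γ)

noncomputable def locD (δ c₀ c₁ : ℝ) : ℝ :=
  morseD2 δ c₀ c₁ + 4*δ + 2 + (morseD δ c₀ c₁ : ℝ) + morseD2 δ c₀ c₁

variable (hSsym : ∀ s ∈ S, s⁻¹ ∈ S) (hSgen : Subgroup.closure S = ⊤)
  {δ c₀ c₁ : ℝ} (hδ : 0 ≤ δ) (hc₀ : 0 < c₀) (hc₁ : 0 ≤ c₁)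
  (hhyp : ∀ x y z w : Γ, min (gpW S w x z) (gpW S w z y) - δ ≤ gpW S w x y)

include hSsym hSgen hδ hc₀ hc₁ hhyp

set_option maxHeartbeats 2000000 in
lemma location (z : Γ) (k : ℕ) (hk : 0 < k) (hzk : wordNorm S z = k)
    (γz : ℤ → Γ) (hγz0 : γz 0 = 1) (hγzpow : ∀ n : ℤ, γz (n * (wordNorm S z : ℤ)) = z ^ n)
    (hγzqg : IsQG S c₀ c₁ γz)
    (w : Γ) (g : Γ) (hwg : w = g * z * g⁻¹)
    (γw : ℤ → Γ) (hγw0 : γw 0 = 1) (hγwpow : ∀ n : ℤ, γw (n * (wordNorm S w : ℤ)) = w ^ n)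
    (hγwqg : IsQG S c₀ c₁ γw)
    (p : ℕ → Γ) (hp0 : p 0 = 1) (hpk : p k = z) (hpgeo : IsGeo S p k) :
    ∃ (j : ℤ) (r : ℕ), r ≤ k ∧
      wordDist S g⁻¹ (z^j * p r) ≤ locD δ c₀ c₁ := by
  classical
  set K : ℝ := morseD2 δ c₀ c₁ with hK
  have hD₁nn : (0:ℝ) ≤ (morseD δ c₀ c₁ : ℝ) := Nat.cast_nonneg _
  have hKnn : 0 ≤ K := by
    rw [hK, show morseD2 δ c₀ c₁ = c₀ * (c₀ * (2*(morseD δ c₀ c₁:ℝ) + 1 + c₁)) + c₁ +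
      (morseD δ c₀ c₁:ℝ) from rfl]
    positivity
  set m : ℕ := wordNorm S w with hm
  have hz1 : z ≠ 1 := by
    intro h
    rw [h, wordNorm_one] at hzk
    omega
  have hw1 : w ≠ 1 := by
    rw [hwg]
    intro h
    apply hz1
    have h2 : g⁻¹ * (g * z * g⁻¹) * g = z := by group
    rw [← h2, h]
    group
  have hm1 : 1 ≤ m := by
    rcases Nat.eq_zero_or_pos m with h | h
    · exact absurd (wordNorm_eq_zero S hSsym hSgen w h) hw1
    · exact h
  have hconj : ∀ j : ℤ, w ^ j = g * z ^ j * g⁻¹ := fun j => by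
    rw [hwg]; exact conj_zpow
  have hwzg : ∀ j : ℤ, w ^ j * g = g * z ^ j := fun j => by
    rw [hconj j]; group
  -- choose n large enough
  set X : ℝ := K + 2*δ + 1 + c₁ + (wordNorm S g : ℝ) with hX
  have hXnn : 0 ≤ X := by rw [hX]; positivity
  set n : ℕ := max 1 ⌈c₀ * X⌉₊ with hn
  have hn1 : 1 ≤ n := le_max_left _ _
  have hnX : X ≤ c₀⁻¹ * n := by
    have h1 : c₀ * X ≤ (n:ℝ) := by
      have h2 : c₀ * X ≤ (⌈c₀ * X⌉₊ : ℝ) := Nat.le_ceil _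
      have h3 : (⌈c₀ * X⌉₊ : ℝ) ≤ (n:ℝ) := by
        exact_mod_cast le_max_right 1 ⌈c₀ * X⌉₊
      linarith
    calc X = c₀⁻¹ * (c₀ * X) := by field_simp
      _ ≤ c₀⁻¹ * n := mul_le_mul_of_nonneg_left h1 (by positivity)
  -- side Gromov products are large
  have hgen : ∀ ν : ℤ, |((ν:ℤ):ℝ)| = (n:ℝ) →
      K + 2*δ + 1 ≤ gpW S 1 (w ^ ν) (g * z ^ ν) := by
    intro ν hν
    -- lower bound on |w^ν|
    have h1 := (hγwqg 0 (ν * m)).1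
    rw [hγw0, hγwpow ν] at h1
    simp only [Int.cast_zero, zero_sub, abs_neg] at h1
    have habs : |((ν * (m:ℤ) : ℤ):ℝ)| = (n:ℝ) * m := by
      push_cast
      rw [abs_mul, hν, abs_of_nonneg (Nat.cast_nonneg m)]
    rw [habs] at h1
    have hnm : (n:ℝ) ≤ (n:ℝ) * m := by
      have h3 : (1:ℝ) ≤ (m:ℝ) := by exact_mod_cast hm1
      nlinarith [Nat.cast_nonneg (α := ℝ) n]
    have h4 : c₀⁻¹ * (n:ℝ) ≤ c₀⁻¹ * ((n:ℝ) * m) :=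
      mul_le_mul_of_nonneg_left hnm (by positivity)
    have h5 : X ≤ c₀⁻¹ * ((n:ℝ) * m) := le_trans hnX h4
    -- distances
    have hdg : wordDist S (w ^ ν) (g * z ^ ν) = wordDist S 1 g := by
      rw [← hwzg]
      have h6 : w ^ ν = w ^ ν * 1 := by group
      nth_rewrite 1 [h6]
      rw [wordDist_left_inv]
    have hd1g : wordDist S 1 g = (wordNorm S g : ℝ) := by
      rw [wordDist_eq]; simp
    have htri : wordDist S 1 (w ^ ν) ≤ wordDist S 1 (g * z ^ ν) + wordDist S 1 g := by
      have h6 := wordDist_triangle S hSsym hSgen 1 (g * z ^ ν) (w ^ ν)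
      have h7 : wordDist S (g * z ^ ν) (w ^ ν) = wordDist S 1 g := by
        rw [wordDist_comm S hSsym hSgen, hdg]
      linarith
    rw [gpW_eq, hdg, hd1g]
    rw [hd1g] at htri
    rw [hX] at h5
    linarith
  have hside1 : K + 2*δ + 1 ≤ gpW S 1 (w ^ (n:ℤ)) (g * z ^ (n:ℤ)) :=
    hgen (n:ℤ) (by simp)
  have hside2 : K + 2*δ + 1 ≤ gpW S 1 (w ^ (-(n:ℤ))) (g * z ^ (-(n:ℤ))) :=
    hgen (-(n:ℤ)) (by simp)
  -- L1 : the Gromov product of opposite powers of w at 1 is small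
  have hL1 : gpW S 1 (w ^ (-(n:ℤ))) (w ^ (n:ℤ)) ≤ K := by
    have hnm0 : (0:ℤ) ≤ (n:ℤ) * m := by positivity
    have ha : ((-(n:ℤ)) * m) ≤ (0:ℤ) := by rw [neg_mul]; omega
    have hM3 := morse_M3 S hSsym hSgen hδ hc₀ hc₁ hhyp γw hγwqg
      ((-(n:ℤ)) * m) ((n:ℤ) * m) 0 ha hnm0
    rw [hγw0, hγwpow (-(n:ℤ)), hγwpow (n:ℤ)] at hM3
    exact hM3
  -- L2 : the Gromov product of the conjugated endpoints at 1 is small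
  have hL2 : gpW S 1 (g * z ^ (-(n:ℤ))) (g * z ^ ((n:ℤ))) ≤ K + 2*δ := by
    by_contra hcon
    push_neg at hcon
    have hA := hhyp (w ^ (-(n:ℤ))) (w ^ (n:ℤ)) (g * z ^ (-(n:ℤ))) 1
    have hB := hhyp (g * z ^ (-(n:ℤ))) (w ^ (n:ℤ)) (g * z ^ (n:ℤ)) 1
    rcases le_total (gpW S 1 (w ^ (-(n:ℤ))) (g * z ^ (-(n:ℤ))))
        (gpW S 1 (g * z ^ (-(n:ℤ))) (w ^ (n:ℤ))) with h | h
    · rw [min_eq_left h] at hA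
      linarith
    · rw [min_eq_right h] at hA
      rcases le_total (gpW S 1 (g * z ^ (-(n:ℤ))) (g * z ^ (n:ℤ)))
          (gpW S 1 (g * z ^ (n:ℤ)) (w ^ (n:ℤ))) with h2 | h2
      · rw [min_eq_left h2] at hB
        linarith
      · rw [min_eq_right h2] at hB
        have hc := gpW_comm S hSsym hSgen 1 (g * z ^ (n:ℤ)) (w ^ (n:ℤ))
        linarith
  -- the geodesic between the conjugated endpoints
  obtain ⟨geo2, hgeo20, hgeo2T, hgeo2g⟩ := exists_geodesic S hSsym hSgen (z ^ (2*(n:ℤ)))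
  set T2 : ℕ := wordNorm S (z ^ (2*(n:ℤ))) with hT2
  set q : ℕ → Γ := fun i => (g * z ^ (-(n:ℤ))) * geo2 i with hq
  have hqgeo : IsGeo S q T2 := isGeo_translate S _ hgeo2g
  have hq0 : q 0 = g * z ^ (-(n:ℤ)) := by rw [hq]; simp [hgeo20]
  have hqT : q T2 = g * z ^ ((n:ℤ)) := by
    rw [hq]
    simp only [hgeo2T]
    rw [mul_assoc, ← zpow_add]
    congr 1
    ring
  -- 1 is in the shadow of that geodesic
  obtain ⟨i₁, hi₁T, hi₁d⟩ := geo_shadow S hSsym hSgen hδ hc₀ hc₁ hhyp q T2 hqgeo 1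
  rw [hq0, hqT] at hi₁d
  have hi₁d' : wordDist S 1 (q i₁) ≤ K + 4*δ + 2 := by linarith
  -- pull back by g : the corresponding geodesic from z^{-n} to z^n
  set q' : ℕ → Γ := fun i => z ^ (-(n:ℤ)) * geo2 i with hq'
  have hq'geo : IsGeo S q' T2 := isGeo_translate S _ hgeo2g
  have hq'0 : q' 0 = γz ((-(n:ℤ)) * k) := by
    rw [hq']
    simp only [hgeo20]
    have := hγzpow (-(n:ℤ))
    rw [hzk] at this
    rw [this]
    group
  have hq'T : q' T2 = γz ((n:ℤ) * k) := by
    rw [hq']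
    simp only [hgeo2T]
    have := hγzpow ((n:ℤ))
    rw [hzk] at this
    rw [this, ← zpow_add]
    congr 1
    ring
  have hnk : ((-(n:ℤ)) * k) ≤ ((n:ℤ) * k) := by
    have h1 : (0:ℤ) ≤ (n:ℤ) * k := by positivity
    rw [neg_mul]
    omega
  obtain ⟨t, htmem, htd⟩ := morse_M1 S hSsym hSgen hδ hc₀ hc₁ hhyp γz hγzqg
    ((-(n:ℤ)) * k) ((n:ℤ) * k) hnk q' T2 hq'geo hq'0 hq'T i₁ hi₁T
  rw [Finset.mem_Icc] at htmem
  -- find the period of t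
  obtain ⟨j, hj1, hj2⟩ : ∃ j : ℤ, j * k ≤ t ∧ t ≤ (j+1) * k := by
    set j0 : ℤ := (t - (-(n:ℤ)) * k) / k with hj0
    refine ⟨-(n:ℤ) + j0, ?_, ?_⟩
    · have := Int.mul_ediv_add_emod (t - (-(n:ℤ)) * k) k
      have hmod := Int.emod_nonneg (t - (-(n:ℤ)) * k) (by omega : (k:ℤ) ≠ 0)
      nlinarith [this, hmod]
    · have := Int.mul_ediv_add_emod (t - (-(n:ℤ)) * k) k
      have hmod := Int.emod_lt_of_pos (t - (-(n:ℤ)) * k) (by omega : (0:ℤ) < k)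
      nlinarith [this, hmod]
  -- the per-period geodesic through prefixes
  set p' : ℕ → Γ := fun i => z ^ j * p i with hp'
  have hp'geo : IsGeo S p' k := isGeo_translate S _ hpgeo
  have hp'0 : p' 0 = γz (j * k) := by
    rw [hp']
    simp only [hp0]
    have := hγzpow j
    rw [hzk] at this
    rw [this]
    group
  have hp'k : p' k = γz ((j+1) * k) := by
    rw [hp']
    simp only [hpk]
    have h7 := hγzpow (j+1)
    rw [hzk] at h7
    rw [h7, zpow_add, zpow_one]
  have hjk : j * k ≤ (j+1) * k := le_trans hj1 hj2
  obtain ⟨r, hrk, hrd⟩ := morse_M2 S hSsym hSgen hδ hc₀ hc₁ hhyp γz hγzqg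
    (j * k) ((j+1) * k) hjk p' k hp'geo hp'0 hp'k t hj1 hj2
  -- assemble
  refine ⟨j, r, hrk, ?_⟩
  have hstep1 : wordDist S g⁻¹ (g⁻¹ * q i₁) = wordDist S 1 (q i₁) := by
    have h6 : g⁻¹ = g⁻¹ * 1 := by group
    nth_rewrite 1 [h6]
    rw [wordDist_left_inv]
  have hgq : g⁻¹ * q i₁ = q' i₁ := by
    rw [hq, hq']
    group
  have htri1 := wordDist_triangle S hSsym hSgen g⁻¹ (g⁻¹ * q i₁) (γz t)
  have htri2 := wordDist_triangle S hSsym hSgen g⁻¹ (γz t) (z ^ j * p r)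
  rw [hgq] at htri1
  have hdq't : wordDist S (q' i₁) (γz t) ≤ (morseD δ c₀ c₁ : ℝ) := htd
  have hrd' : wordDist S (γz t) (z ^ j * p r) ≤ morseD2 δ c₀ c₁ := hrd
  rw [show locD δ c₀ c₁ = morseD2 δ c₀ c₁ + 4*δ + 2 + (morseD δ c₀ c₁ : ℝ) +
    morseD2 δ c₀ c₁ from rfl]
  have hfin : wordDist S g⁻¹ (z ^ j * p r) ≤ wordDist S 1 (q i₁) +
      wordDist S (q' i₁) (γz t) + wordDist S (γz t) (z ^ j * p r) := by
    have h8 : wordDist S g⁻¹ (q' i₁) = wordDist S 1 (q i₁) := by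
      rw [← hgq]
      have h6 : g⁻¹ = g⁻¹ * 1 := by group
      nth_rewrite 1 [h6]
      rw [wordDist_left_inv]
    linarith [htri1, htri2, h8]
  calc wordDist S g⁻¹ (z ^ j * p r) ≤ wordDist S 1 (q i₁) +
      wordDist S (q' i₁) (γz t) + wordDist S (γz t) (z ^ j * p r) := hfin
    _ ≤ (K + 4*δ + 2) + (morseD δ c₀ c₁ : ℝ) + morseD2 δ c₀ c₁ := by
        linarith [hi₁d', hdq't, hrd']
    _ = morseD2 δ c₀ c₁ + 4*δ + 2 + (morseD δ c₀ c₁ : ℝ) + morseD2 δ c₀ c₁ := by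
        rw [hK]; try ring
end Loc
/-- Linear bound on the number of cosets `g⟨z⟩` with `gzg⁻¹ ∈ U(x⁻¹,x,R)`: in a
δ-hyperbolic group, if the bi-infinite paths through the powers of elements of
`U(x⁻¹,x,R)` are (c₀,c₁)-quasi-geodesics (constants depending only on x, R, δ), then
for all large `L` there is `C` such that for every `k` and every `z ∈ U(x⁻¹,x,R)`
with `|z| = k`, the set `C_k(z;x,L,R)` has at most `C·k` elements. -/
theorem conjugacy_coset_count {Γ : Type*} [Group Γ]
    (S : Set Γ) (hSfin : S.Finite) (hSsym : ∀ s ∈ S, s⁻¹ ∈ S)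
    (hSgen : Subgroup.closure S = ⊤)
    (δ : ℝ) (hδ : 0 ≤ δ)
    (hhyp : ∀ x y z w : Γ, min (gpW S w x z) (gpW S w z y) - δ ≤ gpW S w x y)
    (x : Γ) (hx : ∀ n : ℤ, n ≠ 0 → x ^ n ≠ 1) (R : ℝ) (hR : 0 ≤ R)
    (c₀ c₁ : ℝ) (hc₀ : 0 < c₀) (hc₁ : 0 ≤ c₁)
    (hqg : ∀ z ∈ Uset S x R, ∃ γ : ℤ → Γ, γ 0 = 1 ∧
      (∀ n : ℤ, γ (n * (wordNorm S z : ℤ)) = z ^ n) ∧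
      ∀ i j : ℤ, c₀⁻¹ * |(i : ℝ) - (j : ℝ)| - c₁ ≤ wordDist S (γ i) (γ j) ∧
        wordDist S (γ i) (γ j) ≤ c₀ * |(i : ℝ) - (j : ℝ)| + c₁) :
    ∀ L : ℝ, 0 < L → ∃ C : ℝ, 0 < C ∧
      ∀ (k : ℕ) (z : Γ), 0 < k → z ∈ Uset S x R → wordNorm S z = k →
        Set.ncard {q : Γ ⧸ Subgroup.zpowers z | ∃ g : Γ,
            (QuotientGroup.mk g : Γ ⧸ Subgroup.zpowers z) = q ∧
            g * z * g⁻¹ ∈ Uset S x R ∧ |(wordNorm S z : ℝ) - (k : ℝ)| ≤ L} ≤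
          C * k := by
  classical
  intro L hL
  set D : ℕ := ⌈locD δ c₀ c₁⌉₊ with hD
  have hBfin : {u : Γ | wordNorm S u ≤ D}.Finite := ball_finite S hSsym hSgen hSfin D
  set B : Finset Γ := hBfin.toFinset with hB
  refine ⟨2 * (B.card + 1), by positivity, ?_⟩
  intro k z hk hzU hzk
  obtain ⟨p, hp0, hpk, hpgeo⟩ := exists_geodesic S hSsym hSgen z
  rw [hzk] at hpk hpgeo
  obtain ⟨γz, hγz0, hγzpow, hγzqg⟩ := hqg z hzU
  set F : Finset (Γ ⧸ Subgroup.zpowers z) :=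
    (B ×ˢ Finset.range (k+1)).image
      (fun ur => (QuotientGroup.mk (ur.1 * (p ur.2)⁻¹) : Γ ⧸ Subgroup.zpowers z)) with hF
  have hsub : {q : Γ ⧸ Subgroup.zpowers z | ∃ g : Γ,
      (QuotientGroup.mk g : Γ ⧸ Subgroup.zpowers z) = q ∧
      g * z * g⁻¹ ∈ Uset S x R ∧ |(wordNorm S z : ℝ) - (k : ℝ)| ≤ L} ⊆ (F : Set _) := by
    intro qq hqq
    obtain ⟨g, hgq, hgU, _⟩ := hqq
    obtain ⟨γw, hγw0, hγwpow, hγwqg⟩ := hqg (g * z * g⁻¹) hgU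
    obtain ⟨j, r, hrk, hloc⟩ := location S hSsym hSgen hδ hc₀ hc₁ hhyp z k hk hzk
      γz hγz0 hγzpow hγzqg (g * z * g⁻¹) g rfl γw hγw0 hγwpow hγwqg p hp0 hpk hpgeo
    have hu : wordNorm S (g * (z^j * p r)) ≤ D := by
      have h1 : wordDist S g⁻¹ (z^j * p r) = (wordNorm S (g * (z^j * p r)) : ℝ) := by
        rw [wordDist_eq, inv_inv]
      have hDr : locD δ c₀ c₁ ≤ (D:ℝ) := Nat.le_ceil _
      have h2 : (wordNorm S (g * (z^j * p r)) : ℝ) ≤ (D:ℝ) := by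
        rw [← h1]; linarith
      exact_mod_cast h2
    have hgrep : g = (g * (z^j * p r)) * (p r)⁻¹ * z^(-j) := by group
    have hmk : (QuotientGroup.mk g : Γ ⧸ Subgroup.zpowers z) =
        QuotientGroup.mk ((g * (z^j * p r)) * (p r)⁻¹) := by
      conv_lhs => rw [hgrep]
      exact QuotientGroup.mk_mul_of_mem _ (Subgroup.zpow_mem_zpowers z (-j))
    rw [← hgq, hmk]
    apply Finset.mem_coe.mpr
    apply Finset.mem_image.mpr
    refine ⟨(g * (z^j * p r), r), ?_, rfl⟩
    rw [Finset.mem_product]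
    constructor
    · rw [hB, Set.Finite.mem_toFinset]
      exact hu
    · rw [Finset.mem_range]
      omega
  have hcard : ({q : Γ ⧸ Subgroup.zpowers z | ∃ g : Γ,
      (QuotientGroup.mk g : Γ ⧸ Subgroup.zpowers z) = q ∧
      g * z * g⁻¹ ∈ Uset S x R ∧ |(wordNorm S z : ℝ) - (k : ℝ)| ≤ L}).ncard ≤ F.card := by
    have h1 := Set.ncard_le_ncard hsub (F.finite_toSet)
    simpa [Set.ncard_coe_finset] using h1
  have hFcard : F.card ≤ B.card * (k+1) := by
    refine le_trans (Finset.card_image_le) ?_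
    rw [Finset.card_product, Finset.card_range]
  have hcast : (({q : Γ ⧸ Subgroup.zpowers z | ∃ g : Γ,
      (QuotientGroup.mk g : Γ ⧸ Subgroup.zpowers z) = q ∧
      g * z * g⁻¹ ∈ Uset S x R ∧ |(wordNorm S z : ℝ) - (k : ℝ)| ≤ L}).ncard : ℝ) ≤
      (B.card : ℝ) * ((k:ℝ)+1) := by
    have h2 : (({q : Γ ⧸ Subgroup.zpowers z | ∃ g : Γ,
      (QuotientGroup.mk g : Γ ⧸ Subgroup.zpowers z) = q ∧
      g * z * g⁻¹ ∈ Uset S x R ∧ |(wordNorm S z : ℝ) - (k : ℝ)| ≤ L}).ncard : ℕ) ≤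
        B.card * (k+1) := le_trans hcard hFcard
    exact_mod_cast h2
  have hk1 : (1:ℝ) ≤ (k:ℝ) := by exact_mod_cast hk
  have hBnn : (0:ℝ) ≤ (B.card : ℝ) := Nat.cast_nonneg _
  calc (({q : Γ ⧸ Subgroup.zpowers z | ∃ g : Γ,
      (QuotientGroup.mk g : Γ ⧸ Subgroup.zpowers z) = q ∧
      g * z * g⁻¹ ∈ Uset S x R ∧ |(wordNorm S z : ℝ) - (k : ℝ)| ≤ L}).ncard : ℝ)
      ≤ (B.card : ℝ) * ((k:ℝ)+1) := hcast
    _ ≤ 2 * ((B.card : ℝ) + 1) * k := by nlinarith
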